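/- (Peeling lemma) Let G = (U ∪ V, E) be a bipartite (r,c)-boundary expander with r ≥ 1 and c > 0. Then every subset U' ⊆ U of size ℓ ≤ r can be ordered as u₁,…,u_ℓ in such a way that there exists a matching to distinct vertices v₁,…,v_ℓ ∈ V with v_i ∈ N(u_i) \ N({u₁,…,u_{i−1}}) for every i. -/

import Mathlib

/-- The neighbourhood in a bipartite graph (given by its edge set `E`)
of a set `U'` of left vertices. -/
def nbhdSet {α β : Type*} [DecidableEq α] [DecidableEq β]
    (E : Finset (α × β)) (U' : Finset α) : Finset β :=
  (E.filter (fun p => p.1 ∈ U')).image Prod.snd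

/-- The boundary (set of unique neighbours) of a left vertex set `U'`. -/
def boundary {α β : Type*} [DecidableEq α] [DecidableEq β]
    (E : Finset (α × β)) (U' : Finset α) : Finset β :=
  (nbhdSet E U').filter
    (fun v => ((E.filter (fun p => p.2 = v ∧ p.1 ∈ U')).image Prod.fst).card = 1)

/-- `E` is an `(r,c)`-boundary expander on the left vertex set `A`. -/
def isBoundaryExpanderOn {α β : Type*} [DecidableEq α] [DecidableEq β]
    (E : Finset (α × β)) (A : Finset α) (r : ℕ) (c : ℝ) : Prop :=
  ∀ U' ⊆ A, U'.card ≤ r → c * U'.card ≤ ((boundary E U').card : ℝ)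

lemma mem_nbhdSet' {α β : Type*} [DecidableEq α] [DecidableEq β]
    (E : Finset (α × β)) (S : Finset α) (b : β) :
    b ∈ nbhdSet E S ↔ ∃ a ∈ S, (a, b) ∈ E := by
  simp only [nbhdSet, Finset.mem_image, Finset.mem_filter]
  constructor
  · rintro ⟨⟨a, b'⟩, ⟨hE, ha⟩, rfl⟩; exact ⟨a, ha, hE⟩
  · rintro ⟨a, ha, hE⟩; exact ⟨(a, b), ⟨hE, ha⟩, rfl⟩

lemma nbhdSet_mono' {α β : Type*} [DecidableEq α] [DecidableEq β]
    (E : Finset (α × β)) {S T : Finset α} (h : S ⊆ T) :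
    nbhdSet E S ⊆ nbhdSet E T := by
  intro b hb
  rw [mem_nbhdSet'] at hb ⊢
  obtain ⟨a, ha, hE⟩ := hb
  exact ⟨a, h ha, hE⟩

lemma boundary_peel' {α β : Type*} [DecidableEq α] [DecidableEq β]
    (E : Finset (α × β)) (U' : Finset α) {v : β} (hv : v ∈ boundary E U') :
    ∃ u ∈ U', v ∈ nbhdSet E {u} ∧ v ∉ nbhdSet E (U'.erase u) := by
  rw [boundary, Finset.mem_filter] at hv
  obtain ⟨hv1, hv2⟩ := hv
  rw [Finset.card_eq_one] at hv2
  obtain ⟨u, hu⟩ := hv2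
  have humem : u ∈ (E.filter (fun p => p.2 = v ∧ p.1 ∈ U')).image Prod.fst := by
    rw [hu]; exact Finset.mem_singleton_self u
  rw [Finset.mem_image] at humem
  obtain ⟨p, hp, hp1⟩ := humem
  rw [Finset.mem_filter] at hp
  obtain ⟨hpE, hpv, hpU⟩ := hp
  refine ⟨u, hp1 ▸ hpU, ?_, ?_⟩
  · rw [mem_nbhdSet']
    exact ⟨u, Finset.mem_singleton_self u, by rw [← hp1, ← hpv]; exact hpE⟩
  · intro hcon
    rw [mem_nbhdSet'] at hcon
    obtain ⟨a, ha, haE⟩ := hcon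
    have : a ∈ (E.filter (fun p => p.2 = v ∧ p.1 ∈ U')).image Prod.fst := by
      rw [Finset.mem_image]
      exact ⟨(a, v), Finset.mem_filter.mpr ⟨haE, rfl, Finset.mem_of_mem_erase ha⟩, rfl⟩
    rw [hu, Finset.mem_singleton] at this
    exact (Finset.ne_of_mem_erase ha) this

lemma snoc_inj' {n : ℕ} {γ : Type*} {f : Fin n → γ} {x : γ}
    (hf : Function.Injective f) (hx : ∀ i, f i ≠ x) :
    Function.Injective (Fin.snoc f x : Fin (n+1) → γ) := by
  intro i j h
  induction i using Fin.lastCases with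
  | last =>
    induction j using Fin.lastCases with
    | last => rfl
    | cast j => rw [Fin.snoc_last, Fin.snoc_castSucc] at h; exact absurd h.symm (hx j)
  | cast i =>
    induction j using Fin.lastCases with
    | last => rw [Fin.snoc_last, Fin.snoc_castSucc] at h; exact absurd h (hx i)
    | cast j => rw [Fin.snoc_castSucc, Fin.snoc_castSucc] at h; exact congrArg Fin.castSucc (hf h)

lemma image_snoc' {n : ℕ} {γ : Type*} [DecidableEq γ] (f : Fin n → γ) (x : γ) :
    Finset.univ.image (Fin.snoc f x : Fin (n+1) → γ) = insert x (Finset.univ.image f) := by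
  ext b
  simp only [Finset.mem_image, Finset.mem_insert, Finset.mem_univ, true_and]
  constructor
  · rintro ⟨i, rfl⟩
    induction i using Fin.lastCases with
    | last => left; rw [Fin.snoc_last]
    | cast i => right; exact ⟨i, by simp⟩
  · rintro (rfl | ⟨i, rfl⟩)
    · exact ⟨Fin.last n, by simp⟩
    · exact ⟨i.castSucc, by simp⟩

lemma peel_aux' {α β : Type*} [DecidableEq α] [DecidableEq β]
    (E : Finset (α × β)) (r : ℕ) (c : ℝ) (hc : 0 < c)
    (hexp : ∀ U' : Finset α, U'.card ≤ r → c * U'.card ≤ ((boundary E U').card : ℝ)) :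
    ∀ ℓ : ℕ, ℓ ≤ r → ∀ U' : Finset α, U'.card = ℓ →
    ∃ (u : Fin ℓ → α) (v : Fin ℓ → β),
      Function.Injective u ∧ (Finset.univ.image u = U') ∧
      Function.Injective v ∧
      ∀ i : Fin ℓ,
        v i ∈ nbhdSet E {u i} ∧
        v i ∉ nbhdSet E ((Finset.univ.filter (fun j : Fin ℓ => j < i)).image u) := by
  intro ℓ
  induction ℓ with
  | zero =>
    intro _ U' hU'
    rw [Finset.card_eq_zero] at hU'
    exact ⟨Fin.elim0, Fin.elim0, fun i => i.elim0, by simp [hU'],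
      fun i => i.elim0, fun i => i.elim0⟩
  | succ n ih =>
    intro hle U' hU'
    -- boundary nonempty
    have hbpos : (0:ℝ) < ((boundary E U').card : ℝ) := by
      refine lt_of_lt_of_le ?_ (hexp U' (by omega))
      rw [hU']; positivity
    have hbne : (boundary E U').Nonempty := by
      rw [← Finset.card_pos]; exact_mod_cast hbpos
    obtain ⟨v0, hv0⟩ := hbne
    obtain ⟨u0, hu0U, hv0n, hv0not⟩ := boundary_peel' E U' hv0
    have hcard' : (U'.erase u0).card = n := by
      rw [Finset.card_erase_of_mem hu0U, hU']; omega
    obtain ⟨u, v, huinj, himg, hvinj, hcond⟩ := ih (by omega) (U'.erase u0) hcard'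
    have hmemerase : ∀ i : Fin n, u i ∈ U'.erase u0 := by
      intro i; rw [← himg]; exact Finset.mem_image_of_mem u (Finset.mem_univ i)
    refine ⟨Fin.snoc u u0, Fin.snoc v v0, ?_, ?_, ?_, ?_⟩
    · exact snoc_inj' huinj (fun i h => Finset.ne_of_mem_erase (hmemerase i) h)
    · rw [image_snoc', himg, Finset.insert_erase hu0U]
    · refine snoc_inj' hvinj (fun i h => hv0not ?_)
      exact h ▸ nbhdSet_mono' E (by simpa using hmemerase i) (hcond i).1
    · intro i
      induction i using Fin.lastCases with
      | last =>
        constructor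
        · rw [Fin.snoc_last]; simpa using hv0n
        · rw [Fin.snoc_last]
          intro hcon
          refine hv0not (nbhdSet_mono' E ?_ hcon)
          intro b hb
          rw [Finset.mem_image] at hb
          obtain ⟨j, hj, rfl⟩ := hb
          rw [Finset.mem_filter] at hj
          obtain ⟨-, hjlt⟩ := hj
          obtain ⟨j', rfl⟩ := Fin.exists_castSucc_eq.mpr (Fin.ne_last_of_lt hjlt)
          rw [Fin.snoc_castSucc]
          exact hmemerase j'
      | cast i =>
        have h1 : (Fin.snoc u u0 : Fin (n+1) → α) i.castSucc = u i := Fin.snoc_castSucc ..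
        have h2 : (Fin.snoc v v0 : Fin (n+1) → β) i.castSucc = v i := Fin.snoc_castSucc ..
        rw [h1, h2]
        have hset : (Finset.univ.filter (fun j : Fin (n+1) => j < i.castSucc)).image
            (Fin.snoc u u0 : Fin (n+1) → α)
            = (Finset.univ.filter (fun j : Fin n => j < i)).image u := by
          ext b
          simp only [Finset.mem_image, Finset.mem_filter, Finset.mem_univ, true_and]
          constructor
          · rintro ⟨j, hjlt, rfl⟩
            have : j ≠ Fin.last n := Fin.ne_last_of_lt (lt_trans hjlt (Fin.castSucc_lt_last i))
            obtain ⟨j', rfl⟩ := Fin.exists_castSucc_eq.mpr this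
            rw [Fin.castSucc_lt_castSucc_iff] at hjlt
            exact ⟨j', hjlt, by rw [Fin.snoc_castSucc]⟩
          · rintro ⟨j, hjlt, rfl⟩
            exact ⟨j.castSucc, by rwa [Fin.castSucc_lt_castSucc_iff], by rw [Fin.snoc_castSucc]⟩
        rw [hset]
        exact hcond i

/-- Peeling lemma: in an (r,c)-boundary expander with r ≥ 1 and
c > 0, every left set U' of size ℓ ≤ r can be ordered u₁,…,u_ℓ with a matching
v₁,…,v_ℓ such that vᵢ ∈ N(uᵢ) \ N({u₁,…,u_{i−1}}). -/
theorem stmt1 {α β : Type*} [DecidableEq α] [DecidableEq β]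
    (E : Finset (α × β)) (r : ℕ) (c : ℝ) (hr : 1 ≤ r) (hc : 0 < c)
    (hexp : ∀ U' : Finset α, U'.card ≤ r → c * U'.card ≤ ((boundary E U').card : ℝ))
    (U' : Finset α) (ℓ : ℕ) (hcard : U'.card = ℓ) (hℓ : ℓ ≤ r) :
    ∃ (u : Fin ℓ → α) (v : Fin ℓ → β),
      Function.Injective u ∧ (Finset.univ.image u = U') ∧
      Function.Injective v ∧
      ∀ i : Fin ℓ,
        v i ∈ nbhdSet E {u i} ∧
        v i ∉ nbhdSet E ((Finset.univ.filter (fun j : Fin ℓ => j < i)).image u) := by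
  exact peel_aux' E r c hc hexp ℓ hℓ U' hcard
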